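/- Let C_0, …, C_{m-1} be arbitrary real numbers. For every p ∈ P_L with transition vector t, the per-cell sum rate satisfies the identity C_sum(p) = C_0 + Σ_{i=0}^{m-2} t_i·3^{-i}·(C_{i+1} − C_i); in particular, if C_i = C_0 + i·d for a constant d, then C_sum(p) = C_0 + d·Σ_{i=0}^{m-2} t_i·3^{-i}. -/

import Mathlib

/-- A pilot assignment vector `p = (p_0, …, p_{m-1})` is valid if `0 ≤ p_i ≤ 3^i`
for every `i` and `Σ_i p_i · 3^{-i} = 1`. -/
def validP {m : ℕ} (p : Fin m → ℤ) : Prop :=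
  (∀ i, 0 ≤ p i ∧ p i ≤ 3 ^ (i : ℕ)) ∧
  (∑ i, (p i : ℝ) / 3 ^ (i : ℕ)) = 1

/-- The per-cell sum rate `C_sum(p) = Σ_i 3^{-i}·p_i·C_i`. -/
noncomputable def Csum {m : ℕ} (C : ℕ → ℝ) (p : Fin m → ℤ) : ℝ :=
  ∑ i, (p i : ℝ) / 3 ^ (i : ℕ) * C (i : ℕ)

/-- Auxiliary recursion: `t_0 = 1 - q 0`, `t_{i+1} = 3·t_i - q (i+1)`. -/
def transAux (q : ℕ → ℤ) : ℕ → ℤ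
  | 0 => 1 - q 0
  | i + 1 => 3 * transAux q i - q (i + 1)

/-- The transition vector of a pilot assignment vector:
`t_0 = 1 - p_0`, `t_i = 3·t_{i-1} - p_i`. -/
def transVec {m : ℕ} (p : Fin m → ℤ) (i : ℕ) : ℤ :=
  transAux (fun j => if h : j < m then p ⟨j, h⟩ else 0) i

lemma transAux_real (q : ℕ → ℤ) (i : ℕ) :
    (transAux q i : ℝ) = 3 ^ i * (1 - ∑ j ∈ Finset.range (i + 1), (q j : ℝ) / 3 ^ j) := by
  induction i with
  | zero => simp [transAux]
  | succ n ih =>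
      have h3 : (3 : ℝ) ^ (n + 1) ≠ 0 := by positivity
      rw [show transAux q (n + 1) = 3 * transAux q n - q (n + 1) from rfl]
      push_cast
      rw [ih, Finset.sum_range_succ (fun j => (q j : ℝ) / 3 ^ j) (n + 1)]
      field_simp
      ring

lemma abel (f : ℕ → ℝ) (C : ℕ → ℝ) (n : ℕ) :
    ∑ i ∈ Finset.range (n + 1), f i * C i =
      (∑ j ∈ Finset.range (n + 1), f j) * C n -
        ∑ i ∈ Finset.range n, (∑ j ∈ Finset.range (i + 1), f j) * (C (i + 1) - C i) := by
  induction n with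
  | zero => simp
  | succ n ih =>
      rw [Finset.sum_range_succ, ih, Finset.sum_range_succ (fun i => (∑ j ∈ Finset.range (i+1), f j) * (C (i + 1) - C i)), Finset.sum_range_succ f (n+1)]
      ring

/-- For any reals `C_0, …, C_{m-1}` and any valid pilot assignment vector `p`
with transition vector `t`:
`C_sum(p) = C_0 + Σ_{i=0}^{m-2} t_i·3^{-i}·(C_{i+1} - C_i)`; in particular if
`C_i = C_0 + i·d` then `C_sum(p) = C_0 + d·Σ_{i=0}^{m-2} t_i·3^{-i}`. -/
theorem sum_rate_via_transition (m : ℕ) (hm : 2 ≤ m) (C : ℕ → ℝ)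
    (p : Fin m → ℤ) (hp : validP p) :
    Csum C p =
      C 0 + ∑ i ∈ Finset.range (m - 1), (transVec p i : ℝ) / 3 ^ i * (C (i + 1) - C i) ∧
    ∀ d : ℝ, (∀ i < m, C i = C 0 + i * d) →
      Csum C p = C 0 + d * ∑ i ∈ Finset.range (m - 1), (transVec p i : ℝ) / 3 ^ i := by
  set q : ℕ → ℤ := fun j => if h : j < m then p ⟨j, h⟩ else 0 with hq
  set f : ℕ → ℝ := fun j => (q j : ℝ) / 3 ^ j with hf
  obtain ⟨k, hk⟩ : ∃ k, m = k + 1 := ⟨m - 1, by omega⟩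
  have hmk : m - 1 = k := by omega
  have hqp : ∀ i : Fin m, (q (i : ℕ)) = p i := by
    intro i; simp [hq, i.isLt]
  have hCsum : Csum C p = ∑ i ∈ Finset.range (k + 1), f i * C i := by
    rw [Csum, show (∑ i : Fin m, (p i : ℝ) / 3 ^ (i : ℕ) * C (i : ℕ))
        = ∑ i : Fin m, f (i : ℕ) * C (i : ℕ) from
      Finset.sum_congr rfl (fun i _ => by rw [hf]; simp [hqp i]),
      Fin.sum_univ_eq_sum_range (fun i => f i * C i) m, hk]
  have hS : (∑ j ∈ Finset.range (k + 1), f j) = 1 := by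
    have h2 := hp.2
    rw [show (∑ i : Fin m, (p i : ℝ) / 3 ^ (i : ℕ)) = ∑ i : Fin m, f (i : ℕ) from
      Finset.sum_congr rfl (fun i _ => by rw [hf]; simp [hqp i]),
      Fin.sum_univ_eq_sum_range f m, hk] at h2
    exact h2
  have ht : ∀ i < k, ((transVec p i : ℝ) / 3 ^ i) = 1 - ∑ j ∈ Finset.range (i + 1), f j := by
    intro i hi
    have h3 : (3 : ℝ) ^ i ≠ 0 := by positivity
    rw [transVec, transAux_real, hf]
    field_simp
    rfl
  have htel : ∑ i ∈ Finset.range k, (C (i + 1) - C i) = C k - C 0 :=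
    Finset.sum_range_sub C k
  have hrw : ∑ i ∈ Finset.range k, (transVec p i : ℝ) / 3 ^ i * (C (i + 1) - C i)
      = ∑ i ∈ Finset.range k, ((C (i + 1) - C i)
          - (∑ j ∈ Finset.range (i + 1), f j) * (C (i + 1) - C i)) :=
    Finset.sum_congr rfl (fun i hi => by rw [ht i (Finset.mem_range.mp hi)]; ring)
  have main : Csum C p =
      C 0 + ∑ i ∈ Finset.range (m - 1), (transVec p i : ℝ) / 3 ^ i * (C (i + 1) - C i) := by
    rw [hmk, hrw, Finset.sum_sub_distrib, htel, hCsum, abel f C k, hS]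
    ring
  refine ⟨main, fun d hd => ?_⟩
  rw [main, hmk]
  have hc : ∀ i ∈ Finset.range k, (transVec p i : ℝ) / 3 ^ i * (C (i + 1) - C i)
      = d * ((transVec p i : ℝ) / 3 ^ i) := by
    intro i hi
    have hi' := Finset.mem_range.mp hi
    rw [hd (i + 1) (by omega), hd i (by omega)]
    push_cast; ring
  rw [Finset.sum_congr rfl hc, ← Finset.mul_sum]
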